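/- arXiv:2303.09532 — 2 statements merged into one kernel-verified Lean document; each statement's English description precedes it below -/
import Mathlib

section
/- Let f : ℝⁿ → ℝ be C¹ and strictly convex with unique global minimizer ȳ, and let φ : ℝⁿ → ℝ be C², strictly convex, Legendre type, with conjugate φ*, such that x ↦ D_{φ*}(x, x̄) is radially unbounded, where x̄ := ∇φ(ȳ). If x : [0, ∞) → ℝⁿ solves the mirror descent closed-loop system ẋ(t) = −∇f(∇φ*(x(t))), x(0) = x₀, and the solution is defined for all t ≥ 0, then x(t) → x̄ as t → ∞; in particular the control u(t) = −∇f(∇φ*(x(t))) is stabilizing at x₀. -/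
open scoped RealInnerProductSpace
open Filter MeasureTheory

/-- Legendre–Fenchel conjugate: `ψ*(v) = sup_x { ⟨v, x⟩ − ψ(x) }`. -/
noncomputable def fenchel {n : ℕ} (ψ : EuclideanSpace ℝ (Fin n) → ℝ)
    (v : EuclideanSpace ℝ (Fin n)) : ℝ :=
  ⨆ z : EuclideanSpace ℝ (Fin n), (⟪v, z⟫ - ψ z)

/-- Bregman divergence: `D_ψ(y, y') = ψ(y) − ψ(y') − ⟨∇ψ(y'), y − y'⟩`. -/
noncomputable def bregman {n : ℕ} (ψ : EuclideanSpace ℝ (Fin n) → ℝ)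
    (y y' : EuclideanSpace ℝ (Fin n)) : ℝ :=
  ψ y - ψ y' - ⟪gradient ψ y', y - y'⟫

/-- `φ` is of Legendre type: `|∇φ(x)| → ∞` as `|x| → ∞`. -/
def LegendreType {n : ℕ} (φ : EuclideanSpace ℝ (Fin n) → ℝ) : Prop :=
  Tendsto (fun z => ‖gradient φ z‖) (cocompact (EuclideanSpace ℝ (Fin n))) atTop

section MirrorHelpers
open Metric Bornology
variable {n : ℕ}
local notation "E" => EuclideanSpace ℝ (Fin n)

lemma inner_grad (F : E → ℝ) (x v : E) : ⟪gradient F x, v⟫ = fderiv ℝ F x v := by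
  simp [gradient, InnerProductSpace.toDual_symm_apply]

lemma hasDerivAt_line (a b : E) (t : ℝ) :
    HasDerivAt (fun s : ℝ => a + s • (b - a)) (b - a) t := by
  simpa using ((hasDerivAt_id t).smul_const (b - a)).const_add a

lemma grad_continuous {F : E → ℝ} (hF : ContDiff ℝ 1 F) : Continuous (gradient F) := by
  have h : Continuous fun z => fderiv ℝ F z := hF.continuous_fderiv one_ne_zero
  exact (InnerProductSpace.toDual ℝ (EuclideanSpace ℝ (Fin n))).symm.continuous.comp h

lemma grad_ineq {F : E → ℝ} (hF : Differentiable ℝ F) (hc : ConvexOn ℝ Set.univ F)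
    (a b : E) : F a + ⟪gradient F a, b - a⟫ ≤ F b := by
  set L : ℝ → E := fun s => a + s • (b - a) with hL
  have hline : ∀ t : ℝ, HasDerivAt (fun s : ℝ => F (L s))
      (fderiv ℝ F (L t) (b - a)) t := fun t =>
    (hF (L t)).hasFDerivAt.comp_hasDerivAt t (hasDerivAt_line a b t)
  have hg : ConvexOn ℝ Set.univ (F ∘ L) := by
    have := hc.comp_affineMap
      (AffineMap.const ℝ ℝ a + (LinearMap.toAffineMap (LinearMap.toSpanSingleton ℝ _ (b - a))))
    simp [Function.comp, hL, AffineMap.coe_add, LinearMap.toSpanSingleton_apply] at this ⊢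
    exact this
  have h := hg.le_slope_of_hasDerivAt (Set.mem_univ (0:ℝ)) (Set.mem_univ 1) one_pos (hline 0)
  have hslope : slope (F ∘ L) 0 1 = F b - F a := by
    simp [slope_def_field, hL, Function.comp]
  rw [hslope] at h
  have : fderiv ℝ F a (b - a) = ⟪gradient F a, b - a⟫ := (inner_grad F a (b - a)).symm
  simp only [hL] at h
  simp only [zero_smul, add_zero] at h
  linarith [h, this ▸ h]

lemma grad_strict_ineq {F : E → ℝ} (hF : Differentiable ℝ F)
    (hc : StrictConvexOn ℝ Set.univ F) {a b : E} (hab : a ≠ b) :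
    F a + ⟪gradient F a, b - a⟫ < F b := by
  set m : E := (1/2 : ℝ) • a + (1/2 : ℝ) • b with hm
  have hmid : F m < (1/2 : ℝ) * F a + (1/2 : ℝ) * F b :=
    hc.2 (Set.mem_univ a) (Set.mem_univ b) hab (by norm_num) (by norm_num) (by norm_num)
  have h1 := grad_ineq hF hc.convexOn a m
  have hma : m - a = (1/2 : ℝ) • (b - a) := by rw [hm]; module
  rw [hma, real_inner_smul_right] at h1
  linarith

lemma grad_mono {F : E → ℝ} (hF : Differentiable ℝ F) (hc : ConvexOn ℝ Set.univ F)
    (a b : E) : 0 ≤ ⟪gradient F b - gradient F a, b - a⟫ := by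
  have h1 := grad_ineq hF hc a b
  have h2 := grad_ineq hF hc b a
  have : (a - b) = -(b - a) := by module
  rw [this, inner_neg_right] at h2
  rw [inner_sub_left]
  linarith

lemma grad_inj {F : E → ℝ} (hF : Differentiable ℝ F)
    (hc : StrictConvexOn ℝ Set.univ F) : Function.Injective (gradient F) := by
  intro a b hab
  by_contra hne
  have h1 := grad_strict_ineq hF hc hne
  have h2 := grad_strict_ineq hF hc (Ne.symm hne)
  have : (a - b) = -(b - a) := by module
  rw [this, inner_neg_right, ← hab] at h2
  linarith


set_option maxHeartbeats 1000000 in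
lemma grad_surj {φ : E → ℝ} (hd : Differentiable ℝ φ) (hc : ConvexOn ℝ Set.univ φ)
    (hleg : Tendsto (fun z => ‖gradient φ z‖) (cocompact (EuclideanSpace ℝ (Fin n))) atTop)
    (v : E) : ∃ y, gradient φ y = v := by
  classical
  set h : E → ℝ := fun z => φ z - (innerSL ℝ v) z with hh
  set G : E → E := fun z => gradient φ z - v with hGdef
  have hgrad : ∀ z, HasGradientAt h (G z) z := by
    intro z
    have h1 : HasFDerivAt h (fderiv ℝ φ z - (innerSL ℝ v : EuclideanSpace ℝ (Fin n) →L[ℝ] ℝ)) z :=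
      (hd z).hasFDerivAt.sub (innerSL ℝ v).hasFDerivAt
    have h2 : (InnerProductSpace.toDual ℝ (EuclideanSpace ℝ (Fin n))).symm
        (fderiv ℝ φ z - (innerSL ℝ v : EuclideanSpace ℝ (Fin n) →L[ℝ] ℝ)) = G z := by
      rw [map_sub]
      congr 1
      apply (InnerProductSpace.toDual ℝ (EuclideanSpace ℝ (Fin n))).injective
      ext w
      simp
    exact h2 ▸ h1.hasGradientAt
  have hGconv : ∀ a b : E, 0 ≤ ⟪G b - G a, b - a⟫ := by
    intro a b
    have := grad_mono hd hc a b
    have hEq : G b - G a = gradient φ b - gradient φ a := by simp only [hGdef]; abel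
    rwa [hEq]
  have hcont : Continuous h := hd.continuous.sub (innerSL ℝ v).continuous
  have hGlarge : Tendsto (fun z => ‖G z‖) (cocompact (EuclideanSpace ℝ (Fin n))) atTop := by
    apply tendsto_atTop_mono (f := fun z => ‖gradient φ z‖ - ‖v‖)
    · intro z
      simpa [hGdef] using norm_sub_norm_le (gradient φ z) v
    · simpa [sub_eq_add_neg] using tendsto_atTop_add_const_right _ (-‖v‖) hleg
  -- minimizers on closed balls
  have exmin : ∀ r : ℝ, 0 < r → ∃ z ∈ closedBall (0:E) r, IsMinOn h (closedBall (0:E) r) z :=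
    fun r hr => (isCompact_closedBall (0:E) r).exists_isMinOn
      (nonempty_closedBall.mpr hr.le) hcont.continuousOn
  -- first-order optimality
  have opt : ∀ (r : ℝ) (z : E), z ∈ closedBall (0:E) r → IsMinOn h (closedBall (0:E) r) z →
      ∀ w ∈ closedBall (0:E) r, 0 ≤ ⟪G z, w - z⟫ := by
    intro r z hz hmin w hw
    have hseg : segment ℝ z w ⊆ closedBall (0:E) r :=
      (convex_closedBall _ _).segment_subset hz hw
    have htan : w - z ∈ posTangentConeAt (closedBall (0:E) r) z :=
      sub_mem_posTangentConeAt_of_segment_subset hseg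
    have hloc : IsLocalMinOn h (closedBall (0:E) r) z := hmin.filter_mono inf_le_right
    have := hloc.hasFDerivWithinAt_nonneg (hgrad z).hasFDerivAt.hasFDerivWithinAt htan
    simpa using this
  -- critical point from interior min
  have crit : ∀ (r : ℝ) (z : E), IsMinOn h (closedBall (0:E) r) z → ‖z‖ < r → G z = 0 := by
    intro r z hmin hzr
    have hmem : closedBall (0:E) r ∈ nhds z :=
      closedBall_mem_nhds_of_mem (by simpa [mem_ball_zero_iff] using hzr)
    have hloc : IsLocalMin h z := hmin.filter_mono (le_principal_iff.mpr hmem)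
    have h0 := hloc.hasFDerivAt_eq_zero (hgrad z).hasFDerivAt
    have := congrArg (InnerProductSpace.toDual ℝ (EuclideanSpace ℝ (Fin n))).symm h0
    simpa using this
  obtain ⟨z₀, hz₀, hmin₀⟩ := exmin 1 one_pos
  rw [mem_closedBall_zero_iff] at hz₀
  have key : ∃ z, G z = 0 := by
    by_cases hK0 : G z₀ = 0
    · exact ⟨z₀, hK0⟩
    set K := ‖G z₀‖ with hKdef
    have hKpos : 0 < K := norm_pos_iff.mpr hK0
    have hev : {z : E | 2*K < ‖G z‖} ∈ cocompact (EuclideanSpace ℝ (Fin n)) :=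
      hGlarge.eventually (eventually_gt_atTop (2*K))
    rw [mem_cocompact] at hev
    obtain ⟨S, hScomp, hSsub⟩ := hev
    obtain ⟨R, hRS⟩ := hScomp.isBounded.subset_closedBall 0
    set r := max (R + 1) 3 with hrdef
    have hr3 : (3:ℝ) ≤ r := le_max_right _ _
    obtain ⟨z₁, hz₁, hmin₁⟩ := exmin r (by linarith)
    rw [mem_closedBall_zero_iff] at hz₁
    by_cases hG1 : G z₁ = 0
    · exact ⟨z₁, hG1⟩
    exfalso
    have hA : 0 < ‖G z₁‖ := norm_pos_iff.mpr hG1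
    have hint : ¬ ‖z₁‖ < r := fun hlt => hG1 (crit r z₁ hmin₁ hlt)
    have hz1r : ‖z₁‖ = r := le_antisymm hz₁ (not_lt.mp hint)
    have hz1S : z₁ ∉ S := by
      intro hmem
      have := hRS hmem
      rw [mem_closedBall_zero_iff] at this
      have : r ≤ R := hz1r ▸ this
      have : R + 1 ≤ r := le_max_left _ _
      linarith
    have hbig : 2*K < ‖G z₁‖ := hSsub hz1S
    -- optimality with w = -(r/‖G z₁‖) • G z₁
    set w : E := (-(r/‖G z₁‖)) • G z₁ with hwdef
    have hwball : w ∈ closedBall (0:E) r := by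
      rw [mem_closedBall_zero_iff, hwdef, norm_smul]
      rw [norm_neg, Real.norm_eq_abs, abs_div, abs_of_nonneg (by linarith : (0:ℝ) ≤ r),
        abs_of_nonneg hA.le, div_mul_cancel₀]
      exact hA.ne'
    have h1 : 0 ≤ ⟪G z₁, w - z₁⟫ := opt r z₁ (mem_closedBall_zero_iff.mpr hz₁) hmin₁ w hwball
    have hGw : ⟪G z₁, w⟫ = -(r * ‖G z₁‖) := by
      rw [hwdef, real_inner_smul_right, real_inner_self_eq_norm_sq]
      field_simp
    have hGz1 : ⟪G z₁, z₁⟫ ≤ -(r * ‖G z₁‖) := by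
      rw [inner_sub_right, hGw] at h1
      linarith
    -- monotonicity between z₀ and z₁
    have hmono := hGconv z₀ z₁
    rw [inner_sub_left, inner_sub_right, inner_sub_right] at hmono
    set A := ‖G z₁‖ with hAdef
    set p1 := ⟪G z₁, z₁⟫ with hp1
    set p0 := ⟪G z₁, z₀⟫ with hp0
    set q1 := ⟪G z₀, z₁⟫ with hq1
    set q0 := ⟪G z₀, z₀⟫ with hq0
    have hb1 : -A ≤ p0 := by
      have := abs_real_inner_le_norm (G z₁) z₀
      have h2 : |p0| ≤ A * 1 := by
        rw [hp0, hAdef]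
        calc |⟪G z₁, z₀⟫| ≤ ‖G z₁‖ * ‖z₀‖ := abs_real_inner_le_norm _ _
        _ ≤ ‖G z₁‖ * 1 := by nlinarith [norm_nonneg (G z₁)]
      rw [mul_one] at h2
      linarith [neg_abs_le p0]
    have hb2 : -(K*r + K) ≤ q1 - q0 := by
      have c1 : |q1| ≤ K * r := by
        rw [hq1, hKdef]
        calc |⟪G z₀, z₁⟫| ≤ ‖G z₀‖ * ‖z₁‖ := abs_real_inner_le_norm _ _
        _ = ‖G z₀‖ * r := by rw [hz1r]
      have c2 : |q0| ≤ K * 1 := by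
        rw [hq0, hKdef]
        calc |⟪G z₀, z₀⟫| ≤ ‖G z₀‖ * ‖z₀‖ := abs_real_inner_le_norm _ _
        _ ≤ ‖G z₀‖ * 1 := by nlinarith [norm_nonneg (G z₀)]
      rw [mul_one] at c2
      linarith [neg_abs_le q1, neg_abs_le q0, le_abs_self q1, le_abs_self q0]
    have h6 : r*A - A ≤ K*r + K := by linarith
    have h7 : (r-1)*(2*K) < (r-1)*A := mul_lt_mul_of_pos_left hbig (by linarith : (0:ℝ) < r-1)
    have h8 : (r-1)*(2*K) = 2*(K*r) - 2*K := by ring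
    have h9 : (r-1)*A = r*A - A := by ring
    have h10 : K*r < 3*K := by linarith
    have h11 : K*(r-3) < 0 := by linarith [h10]
    have h12 : 0 ≤ K*(r-3) := mul_nonneg hKpos.le (by linarith : (0:ℝ) ≤ r-3)
    linarith
  obtain ⟨z, hz⟩ := key
  refine ⟨z, ?_⟩
  have h0 : gradient φ z - v = 0 := hz
  rw [sub_eq_zero] at h0
  exact h0


lemma conj_pack {φ : E → ℝ} (hφ : ContDiff ℝ 1 φ) (hsc : StrictConvexOn ℝ Set.univ φ)
    (hleg : Tendsto (fun z => ‖gradient φ z‖) (cocompact (EuclideanSpace ℝ (Fin n))) atTop) :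
    ∃ Y : E → E, Continuous Y ∧ (∀ v, gradient φ (Y v) = v) ∧ (∀ y, Y (gradient φ y) = y) ∧
      (∀ v, fenchel φ v = ⟪v, Y v⟫ - φ (Y v)) ∧ (∀ v, HasGradientAt (fenchel φ) (Y v) v) ∧
      (∀ v z, ⟪v, z⟫ - φ z ≤ fenchel φ v) := by
  classical
  have hdiff : Differentiable ℝ φ := hφ.differentiable one_ne_zero
  have hgc : Continuous (gradient φ) := grad_continuous hφ
  have hinj : Function.Injective (gradient φ) := grad_inj hdiff hsc
  have hsurj : ∀ v : E, ∃ y, gradient φ y = v := grad_surj hdiff hsc.convexOn hleg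
  set Y : E → E := fun v => Classical.choose (hsurj v) with hYdef
  have hgy : ∀ v, gradient φ (Y v) = v := fun v => Classical.choose_spec (hsurj v)
  have hyg : ∀ y, Y (gradient φ y) = y := fun y => hinj (hgy (gradient φ y))
  have hco : Tendsto (gradient φ) (cocompact (EuclideanSpace ℝ (Fin n)))
      (cocompact (EuclideanSpace ℝ (Fin n))) := by
    have h1 : Tendsto (gradient φ) (cocompact (EuclideanSpace ℝ (Fin n)))
        (cobounded (EuclideanSpace ℝ (Fin n))) := by
      rw [← comap_norm_atTop]
      exact tendsto_comap_iff.mpr hleg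
    rwa [cobounded_eq_cocompact] at h1
  have hproper : IsProperMap (gradient φ) := isProperMap_iff_tendsto_cocompact.mpr ⟨hgc, hco⟩
  have hYcont : Continuous Y := by
    rw [continuous_iff_isClosed]
    intro F hF
    have hpre : Y ⁻¹' F = gradient φ '' F := by
      ext z
      constructor
      · intro hz; exact ⟨Y z, hz, hgy z⟩
      · rintro ⟨y, hy, rfl⟩; rw [Set.mem_preimage, hyg]; exact hy
    rw [hpre]
    exact hproper.isClosedMap F hF
  have bound : ∀ v z : E, ⟪v, z⟫ - φ z ≤ ⟪v, Y v⟫ - φ (Y v) := by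
    intro v z
    have h1 := grad_ineq hdiff hsc.convexOn (Y v) z
    rw [hgy v] at h1
    have h2 : ⟪v, z - Y v⟫ = ⟪v, z⟫ - ⟪v, Y v⟫ := inner_sub_right _ _ _
    linarith
  have hψ : ∀ v, fenchel φ v = ⟪v, Y v⟫ - φ (Y v) := by
    intro v
    simp only [fenchel]
    apply le_antisymm
    · exact ciSup_le (fun z => bound v z)
    · refine le_ciSup (f := fun z : EuclideanSpace ℝ (Fin n) => ⟪v, z⟫ - φ z) ⟨⟪v, Y v⟫ - φ (Y v), ?_⟩ (Y v)
      rintro _ ⟨z, rfl⟩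
      exact bound v z
  refine ⟨Y, hYcont, hgy, hyg, hψ, ?_, fun v z => by rw [hψ v]; exact bound v z⟩
  intro v
  rw [hasGradientAt_iff_isLittleO, Asymptotics.isLittleO_iff]
  intro c hc
  have hcY : ∀ᶠ w in nhds v, ‖Y w - Y v‖ ≤ c := by
    have h3 := (hYcont.tendsto v).eventually (Metric.closedBall_mem_nhds (Y v) hc)
    filter_upwards [h3] with w hw
    rw [dist_eq_norm] at hw
    exact hw
  filter_upwards [hcY] with w hw
  have e1 : ⟪Y v, w - v⟫ = ⟪w, Y v⟫ - ⟪v, Y v⟫ := by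
    rw [inner_sub_right, real_inner_comm (Y v) w, real_inner_comm (Y v) v]
  have hlow : 0 ≤ fenchel φ w - fenchel φ v - ⟪Y v, w - v⟫ := by
    have h1 : ⟪w, Y v⟫ - φ (Y v) ≤ fenchel φ w := by rw [hψ w]; exact bound w (Y v)
    rw [hψ v]
    linarith
  have hup : fenchel φ w - fenchel φ v - ⟪Y v, w - v⟫ ≤ ⟪w - v, Y w - Y v⟫ := by
    have h1 : ⟪v, Y w⟫ - φ (Y w) ≤ fenchel φ v := by rw [hψ v]; exact bound v (Y w)
    rw [hψ w] at *
    have e2 : ⟪w - v, Y w - Y v⟫ = ⟪w, Y w⟫ - ⟪v, Y w⟫ - ⟪w, Y v⟫ + ⟪v, Y v⟫ := by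
      rw [inner_sub_left, inner_sub_right, inner_sub_right]
      ring
    linarith [e1, e2, h1]
  have hcs : ⟪w - v, Y w - Y v⟫ ≤ c * ‖w - v‖ := by
    calc ⟪w - v, Y w - Y v⟫ ≤ ‖w - v‖ * ‖Y w - Y v‖ := real_inner_le_norm _ _
    _ ≤ ‖w - v‖ * c := by nlinarith [norm_nonneg (w - v)]
    _ = c * ‖w - v‖ := mul_comm _ _
  rw [Real.norm_eq_abs, abs_of_nonneg hlow]
  calc fenchel φ w - fenchel φ v - ⟪Y v, w - v⟫ ≤ ⟪w - v, Y w - Y v⟫ := hup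
  _ ≤ c * ‖w - v‖ := hcs
  _ ≤ c * ‖w - v‖ := le_rfl


lemma deriv_decrease {F F' : ℝ → ℝ} {a b c : ℝ} (hab : a ≤ b)
    (hF : ∀ t ∈ Set.Icc a b, HasDerivAt F (F' t) t)
    (hbd : ∀ t ∈ Set.Icc a b, F' t ≤ c) : F b ≤ F a + c * (b - a) := by
  rcases eq_or_lt_of_le hab with rfl | hlt
  · simp
  set G : ℝ → ℝ := fun t => c * t - F t with hG
  have hGd : ∀ t ∈ Set.Ioo a b, HasDerivAt G (c - F' t) t := fun t ht => by
    have := ((hasDerivAt_id t).const_mul c).sub (hF t (Set.mem_Icc_of_Ioo ht))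
    simp at this
    exact this
  have hmono : MonotoneOn G (Set.Icc a b) := by
    apply monotoneOn_of_deriv_nonneg (convex_Icc a b)
    · exact (continuousOn_const.mul continuousOn_id).sub
        (fun t ht => (hF t ht).continuousAt.continuousWithinAt)
    · intro t ht
      rw [interior_Icc] at ht
      exact ((hGd t ht).differentiableAt).differentiableWithinAt
    · intro t ht
      rw [interior_Icc] at ht
      rw [(hGd t ht).deriv]
      have := hbd t (Set.mem_Icc_of_Ioo ht)
      linarith
  have h := hmono (Set.left_mem_Icc.mpr hab) (Set.right_mem_Icc.mpr hab) hab
  simp only [hG] at h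
  have : c * a - F a ≤ c * b - F b := h
  linarith

lemma min_strict {f : E → ℝ} (hfconv : StrictConvexOn ℝ Set.univ f)
    {ybar : E} (hmin : ∀ z, f ybar ≤ f z) {y : E} (hy : y ≠ ybar) : f ybar < f y := by
  by_contra hcon
  push_neg at hcon
  have heq : f y = f ybar := le_antisymm hcon (hmin y)
  have hm := hfconv.2 (Set.mem_univ y) (Set.mem_univ ybar) hy
    (by norm_num : (0:ℝ) < 1/2) (by norm_num : (0:ℝ) < 1/2) (by norm_num)
  rw [heq] at hm
  simp only [smul_eq_mul] at hm

  have := hmin ((1/2 : ℝ) • y + (1/2 : ℝ) • ybar)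
  linarith


end MirrorHelpers

set_option maxHeartbeats 1000000 in
/-- if `x ↦ D_{φ*}(x, x̄)` is radially unbounded, every forward-complete
solution of the mirror-descent closed loop `ẋ = −∇f(∇φ*(x))`, `x(0) = x₀` converges
to `x̄ = ∇φ(ȳ)`; i.e. the feedback control is stabilizing at `x₀`. -/
theorem mirror_descent_stabilizes {n : ℕ} (f φ : EuclideanSpace ℝ (Fin n) → ℝ)
    (hf : ContDiff ℝ 1 f) (hfconv : StrictConvexOn ℝ Set.univ f)
    (ybar : EuclideanSpace ℝ (Fin n)) (hmin : ∀ z, f ybar ≤ f z)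
    (hφ : ContDiff ℝ 2 φ) (hφconv : StrictConvexOn ℝ Set.univ φ)
    (hleg : LegendreType φ)
    (xbar : EuclideanSpace ℝ (Fin n)) (hxbar : xbar = gradient φ ybar)
    (hrad : Tendsto (fun z => bregman (fenchel φ) z xbar)
      (cocompact (EuclideanSpace ℝ (Fin n))) atTop)
    (x₀ : EuclideanSpace ℝ (Fin n)) (x : ℝ → EuclideanSpace ℝ (Fin n))
    (hx0 : x 0 = x₀)
    (hode : ∀ t : ℝ, 0 ≤ t →
      HasDerivAt x (-gradient f (gradient (fenchel φ) (x t))) t) :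
    Tendsto x atTop (nhds xbar) := by
  classical
  obtain ⟨Y, hYcont, hgy, hyg, hψval, hψgrad, hbound⟩ :=
    conj_pack (hφ.of_le one_le_two) hφconv hleg
  have hgradψ : ∀ v, gradient (fenchel φ) v = Y v := fun v => (hψgrad v).gradient
  have hYxbar : Y xbar = ybar := by rw [hxbar, hyg]
  have hfd : Differentiable ℝ f := hf.differentiable one_ne_zero
  have hfgc : Continuous (gradient f) := grad_continuous hf
  set W : EuclideanSpace ℝ (Fin n) → ℝ :=
    fun z => fenchel φ z - fenchel φ xbar - ⟪ybar, z - xbar⟫ with hWdef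
  have hbregW : (fun z => bregman (fenchel φ) z xbar) = W := by
    funext z
    rw [bregman, hWdef, hgradψ xbar, hYxbar]
  have hWnonneg : ∀ z, 0 ≤ W z := by
    intro z
    have h1 : ⟪z, ybar⟫ - φ ybar ≤ fenchel φ z := hbound z ybar
    have h2 : fenchel φ xbar = ⟪xbar, ybar⟫ - φ ybar := by rw [hψval xbar, hYxbar]
    have h3 : ⟪ybar, z - xbar⟫ = ⟪z, ybar⟫ - ⟪xbar, ybar⟫ := by
      rw [inner_sub_right, real_inner_comm ybar z, real_inner_comm ybar xbar]
    rw [hWdef]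
    dsimp only
    linarith
  -- trajectory derivative facts
  have hxd : ∀ t, 0 ≤ t → HasDerivAt x (-(gradient f (Y (x t)))) t := by
    intro t ht
    have := hode t ht
    rwa [hgradψ] at this
  set V : ℝ → ℝ := fun t => W (x t) with hVdef
  set D : ℝ → ℝ := fun t => ⟪Y (x t) - ybar, -(gradient f (Y (x t)))⟫ with hDdef
  have hVd : ∀ t, 0 ≤ t → HasDerivAt V (D t) t := by
    intro t ht
    have h1 : HasDerivAt (fun s => fenchel φ (x s)) ⟪Y (x t), -(gradient f (Y (x t)))⟫ t := by
      have := (hψgrad (x t)).hasFDerivAt.comp_hasDerivAt t (hxd t ht)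
      simp at this ⊢
      exact this
    have h2 : HasDerivAt (fun s => ⟪ybar, x s - xbar⟫) ⟪ybar, -(gradient f (Y (x t)))⟫ t := by
      have h3 := ((hxd t ht).sub_const xbar)
      have := (innerSL ℝ ybar).hasFDerivAt.comp_hasDerivAt t h3
      simp at this ⊢
      exact this
    have h4 := (h1.sub_const (fenchel φ xbar)).sub h2
    have h5 : ⟪Y (x t), -(gradient f (Y (x t)))⟫ - ⟪ybar, -(gradient f (Y (x t)))⟫ = D t := by
      rw [hDdef]
      dsimp only
      rw [inner_sub_left]
    rw [h5] at h4
    exact h4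
  have hDneg : ∀ t, 0 ≤ t → D t ≤ -(f (Y (x t)) - f ybar) := by
    intro t ht
    have h1 := grad_ineq hfd hfconv.convexOn (Y (x t)) ybar
    have h2 : D t = -⟪gradient f (Y (x t)), Y (x t) - ybar⟫ := by
      rw [hDdef]; dsimp only
      rw [inner_neg_right, real_inner_comm]
    have h3 : ⟪gradient f (Y (x t)), ybar - Y (x t)⟫
        = -⟪gradient f (Y (x t)), Y (x t) - ybar⟫ := by
      rw [← inner_neg_right]
      congr 1
      module
    rw [h2]
    rw [h3] at h1
    linarith
  have hDnonpos : ∀ t, 0 ≤ t → D t ≤ 0 := by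
    intro t ht
    have := hDneg t ht
    have := hmin (Y (x t))
    linarith
  -- V is nonincreasing on [0, ∞)
  have hVmono : ∀ a b : ℝ, 0 ≤ a → a ≤ b → V b ≤ V a := by
    intro a b ha hab
    have := deriv_decrease hab (fun t ht => hVd t (le_trans ha ht.1))
      (fun t ht => hDnonpos t (le_trans ha ht.1))
    linarith
  -- trajectory stays in a compact set
  have hV0 : V 0 = W x₀ := by rw [hVdef]; dsimp only; rw [hx0]
  have hrad' : Tendsto W (cocompact (EuclideanSpace ℝ (Fin n))) atTop := hbregW ▸ hrad
  have hev : {z : EuclideanSpace ℝ (Fin n) | W x₀ < W z}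
      ∈ cocompact (EuclideanSpace ℝ (Fin n)) := hrad'.eventually (eventually_gt_atTop (W x₀))
  rw [mem_cocompact] at hev
  obtain ⟨S, hScomp, hSsub⟩ := hev
  have htraj : ∀ t, 0 ≤ t → x t ∈ S := by
    intro t ht
    by_contra hxs
    have h1 : W x₀ < W (x t) := hSsub hxs
    have h2 : V t ≤ V 0 := hVmono 0 t le_rfl ht
    rw [hV0] at h2
    exact absurd h2 (not_le.mpr h1)
  -- speed bound
  obtain ⟨C, hC⟩ := hScomp.exists_bound_of_continuousOn
    ((hfgc.comp hYcont).continuousOn (s := S))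
  set M := max C 0 with hMdef
  have hM0 : (0:ℝ) ≤ M := le_max_right _ _
  have hspeed : ∀ a b : ℝ, 0 ≤ a → a ≤ b → ‖x b - x a‖ ≤ M * (b - a) := by
    intro a b ha hab
    have := (convex_Icc a b).norm_image_sub_le_of_norm_hasDerivWithin_le
      (f := x) (f' := fun t => -(gradient f (Y (x t)))) (C := M)
      (fun t ht => (hxd t (le_trans ha ht.1)).hasDerivWithinAt)
      (fun t ht => by
        rw [norm_neg]
        exact le_trans (hC (x t) (htraj t (le_trans ha ht.1))) (le_max_left _ _))
      (Set.left_mem_Icc.mpr hab) (Set.right_mem_Icc.mpr hab)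
    calc ‖x b - x a‖ ≤ M * ‖b - a‖ := this
    _ = M * (b - a) := by rw [Real.norm_eq_abs, abs_of_nonneg (by linarith)]
  -- main contradiction argument
  by_contra hcon
  rw [Metric.tendsto_atTop] at hcon
  push_neg at hcon
  obtain ⟨ε, hε, hbad⟩ := hcon
  choose T hT1 hT2 using hbad
  set M1 := M + 1 with hM1def
  have hM1pos : (0:ℝ) < M1 := by rw [hM1def]; linarith
  set η : ℝ := min 1 (ε / (2 * M1)) with hηdef
  have hηpos : 0 < η := lt_min one_pos (by positivity)
  have hMη : M * η ≤ ε / 2 := by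
    have hη2 : η ≤ ε / (2 * M1) := min_le_right _ _
    have h1 : η * (2 * M1) ≤ ε := by
      rw [← le_div_iff₀ (by positivity)]
      exact hη2
    nlinarith
  -- the compact region away from xbar
  set Cset : Set (EuclideanSpace ℝ (Fin n)) := S ∩ {z | ε/2 ≤ dist z xbar} with hCsetdef
  have hCcomp : IsCompact Cset := hScomp.inter_right
    (isClosed_le continuous_const ((continuous_id.dist continuous_const)))
  -- times sequence
  set s : ℕ → ℝ := fun k => Nat.rec (T 0) (fun _ prev => T (prev + η)) k with hsdef
  have hs0 : s 0 = T 0 := rfl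
  have hssucc : ∀ k, s (k+1) = T (s k + η) := fun k => rfl
  have hsnn : ∀ k, 0 ≤ s k := by
    intro k
    induction k with
    | zero => exact le_trans le_rfl (hT1 0)
    | succ k ih =>
      rw [hssucc]
      exact le_trans (by linarith [hηpos]) (hT1 (s k + η))
  have hsgap : ∀ k, s k + η ≤ s (k+1) := by
    intro k
    rw [hssucc]
    exact hT1 (s k + η)
  have hsdist : ∀ k, ε ≤ dist (x (s k)) xbar := by
    intro k
    cases k with
    | zero => exact hT2 0
    | succ k => rw [hssucc]; exact hT2 (s k + η)
  -- δ : positive decrease rate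
  set ρ : EuclideanSpace ℝ (Fin n) → ℝ := fun z => ⟪gradient f (Y z), Y z - ybar⟫ with hρdef
  have hρcont : Continuous ρ := by
    apply Continuous.inner (hfgc.comp hYcont)
    exact hYcont.sub continuous_const
  have hCne : Cset.Nonempty := by
    refine ⟨x (s 0), htraj (s 0) (hsnn 0), ?_⟩
    have := hsdist 0
    simp only [Set.mem_setOf_eq]
    linarith
  obtain ⟨zs, hzs, hzmin⟩ := hCcomp.exists_isMinOn hCne hρcont.continuousOn
  set δ := ρ zs with hδdef
  have hρpos : ∀ z ∈ Cset, 0 < ρ z := by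
    intro z hz
    have hzne : Y z ≠ ybar := by
      intro hYz
      have : z = xbar := by
        have h1 := hgy z
        rw [hYz] at h1
        rw [← h1, ← hxbar]
      rw [this] at hz
      have := hz.2
      simp only [Set.mem_setOf_eq, dist_self] at this
      linarith
    have h1 := grad_ineq hfd hfconv.convexOn (Y z) ybar
    have h2 : f ybar < f (Y z) := min_strict hfconv hmin hzne
    have h3 : ⟪gradient f (Y z), ybar - Y z⟫ = -⟪gradient f (Y z), Y z - ybar⟫ := by
      rw [← inner_neg_right]; congr 1; module
    rw [h3] at h1
    rw [hρdef]
    dsimp only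
    linarith
  have hδpos : 0 < δ := hρpos zs hzs
  -- window decrease
  have hwind : ∀ k, V (s k + η) ≤ V (s k) - δ * η := by
    intro k
    have hkey : ∀ τ ∈ Set.Icc (s k) (s k + η), D τ ≤ -δ := by
      intro τ hτ
      have hτ0 : 0 ≤ τ := le_trans (hsnn k) hτ.1
      have hxτS : x τ ∈ S := htraj τ hτ0
      have hdist : ε/2 ≤ dist (x τ) xbar := by
        have hnear : dist (x τ) (x (s k)) ≤ ε/2 := by
          have := hspeed (s k) τ (hsnn k) hτ.1
          rw [dist_eq_norm]
          calc ‖x τ - x (s k)‖ ≤ M * (τ - s k) := this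
          _ ≤ M * η := by
            apply mul_le_mul_of_nonneg_left _ hM0
            linarith [hτ.2]
          _ ≤ ε/2 := hMη
        have htri := dist_triangle (x (s k)) (x τ) xbar
        have := hsdist k
        rw [dist_comm (x (s k)) (x τ)] at htri
        linarith
      have hxτC : x τ ∈ Cset := ⟨hxτS, hdist⟩
      have h1 : δ ≤ ρ (x τ) := hzmin hxτC
      have h2 : D τ = -ρ (x τ) := by
        rw [hDdef, hρdef]
        dsimp only
        rw [inner_neg_right, real_inner_comm]
      rw [h2]
      linarith
    have := deriv_decrease (by linarith [hηpos] : s k ≤ s k + η)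
      (fun τ hτ => hVd τ (le_trans (hsnn k) hτ.1)) hkey
    have harith : V (s k) + (-δ) * (s k + η - s k) = V (s k) - δ * η := by ring
    rw [harith] at this
    exact this
  have hstep : ∀ k, V (s (k+1)) ≤ V (s k) - δ * η := by
    intro k
    have h1 := hwind k
    have h2 : V (s (k+1)) ≤ V (s k + η) := hVmono (s k + η) (s (k+1))
      (by linarith [hsnn k, hηpos]) (hsgap k)
    linarith
  have hiter : ∀ k : ℕ, V (s k) ≤ V (s 0) - k * (δ * η) := by
    intro k
    induction k with
    | zero => simp
    | succ k ih =>
      have := hstep k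
      push_cast
      push_cast at ih
      linarith
  obtain ⟨k, hk⟩ := exists_nat_gt (V (s 0) / (δ * η))
  have hδη : 0 < δ * η := mul_pos hδpos hηpos
  have h1 : V (s 0) < k * (δ * η) := by
    rw [div_lt_iff₀ hδη] at hk
    linarith
  have h2 := hiter k
  have h3 : 0 ≤ V (s k) := hWnonneg (x (s k))
  linarith
end

section
/- Let f : ℝⁿ → ℝ be C¹ and convex as well as strictly convex with unique global minimizer ȳ, and let φ : ℝⁿ → ℝ be C², strictly convex, Legendre type, with conjugate φ*. Let (x(t), y(t)) be the state and output trajectories of the mirror descent dynamics ẋ(t) = −∇f(∇φ*(x(t))), y(t) = ∇φ*(x(t)), with x(0) = x₀ and y₀ = ∇φ*(x₀). Then for every t > 0, f(y(t)) − f(ȳ) ≤ D_φ(ȳ, y₀) / t. -/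
open scoped RealInnerProductSpace
open Filter MeasureTheory

open Set Metric InnerProductSpace

variable {n : ℕ}
local notation "H" => EuclideanSpace ℝ (Fin n)

/-- inner product gradient characterization -/
lemma inner_hasGradientAt (v z : H) : HasGradientAt (fun w : H => ⟪v, w⟫) v z := by
  rw [hasGradientAt_iff_hasFDerivAt]
  have : (fun w : H => ⟪v, w⟫) = fun w => (toDual ℝ H v) w := by
    funext w; simp [toDual_apply_apply]
  rw [this]
  exact (toDual ℝ H v).hasFDerivAt

lemma lineMap_hasDerivAt (z w : H) (τ : ℝ) :
    HasDerivAt (fun τ : ℝ => z + τ • (w - z)) (w - z) τ := by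
  simpa using ((hasDerivAt_id τ).smul_const (w - z)).const_add z

lemma comp_line_hasDerivAt {ψ : H → ℝ} {g z : H} (hg : HasGradientAt ψ g z) (w : H) :
    HasDerivAt (fun τ : ℝ => ψ (z + τ • (w - z))) ⟪g, w - z⟫ 0 := by
  have hz0 : z + (0:ℝ) • (w - z) = z := by simp
  have h1 : HasDerivAt (fun τ : ℝ => ψ (z + τ • (w - z))) ((toDual ℝ H g) (w - z)) 0 := by
    refine HasFDerivAt.comp_hasDerivAt 0 ?_ (lineMap_hasDerivAt z w 0)
    rw [hz0]; exact hg.hasFDerivAt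
  simpa only [toDual_apply_apply] using h1

lemma convexOn_comp_line {ψ : H → ℝ} (hψ : ConvexOn ℝ Set.univ ψ) (z w : H) :
    ConvexOn ℝ Set.univ (fun τ : ℝ => ψ (z + τ • (w - z))) := by
  have : (fun τ : ℝ => ψ (z + τ • (w - z))) = ψ ∘ (AffineMap.lineMap z w) := by
    funext τ; simp [AffineMap.lineMap_apply, add_comm]
  rw [this]
  simpa using hψ.comp_affineMap (AffineMap.lineMap z w)

/-- gradient inequality for convex functions -/
lemma grad_ineq_s11 {ψ : H → ℝ} (hψ : ConvexOn ℝ Set.univ ψ) {z g : H}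
    (hg : HasGradientAt ψ g z) (w : H) : ψ z + ⟪g, w - z⟫ ≤ ψ w := by
  have hd := comp_line_hasDerivAt hg w
  have hc := convexOn_comp_line hψ z w
  have h2 := hc.le_slope_of_hasDerivAt (Set.mem_univ 0) (Set.mem_univ 1) zero_lt_one hd
  rw [slope_def_field] at h2
  have e1 : z + (1:ℝ) • (w - z) = w := by norm_num
  have e0 : z + (0:ℝ) • (w - z) = z := by norm_num
  rw [e1, e0] at h2
  simp only [sub_zero, div_one] at h2
  linarith

lemma grad_mono_s11 {ψ : H → ℝ} (hψ : ConvexOn ℝ Set.univ ψ) {a b ga gb : H}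
    (ha : HasGradientAt ψ ga a) (hb : HasGradientAt ψ gb b) :
    0 ≤ ⟪ga - gb, a - b⟫ := by
  have h1 := grad_ineq_s11 hψ ha b
  have h2 := grad_ineq_s11 hψ hb a
  have e : ⟪ga - gb, a - b⟫ = -⟪ga, b - a⟫ - ⟪gb, a - b⟫ := by
    rw [inner_sub_left]
    rw [show (b - a : H) = -(a - b) by abel, inner_neg_right]
    ring
  rw [e]; linarith

lemma gradsub {ψ χ : H → ℝ} {a b z : H} (h1 : HasGradientAt ψ a z)
    (h2 : HasGradientAt χ b z) : HasGradientAt (fun w => ψ w - χ w) (a - b) z := by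
  rw [hasGradientAt_iff_hasFDerivAt, map_sub]
  exact h1.hasFDerivAt.sub h2.hasFDerivAt

lemma ball_opt {ψ : H → ℝ} {r : ℝ} {zs g : H} (hmin : IsMinOn ψ (closedBall 0 r) zs)
    (hz : zs ∈ closedBall (0 : H) r) (hg : HasGradientAt ψ g zs) {w : H}
    (hw : w ∈ closedBall (0 : H) r) : 0 ≤ ⟪g, w - zs⟫ := by
  have hd := comp_line_hasDerivAt hg w
  have hmem : ∀ τ : ℝ, τ ∈ Set.Ioo (0:ℝ) 1 → zs + τ • (w - zs) ∈ closedBall (0 : H) r := by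
    intro τ hτ
    have : zs + τ • (w - zs) = (1 - τ) • zs + τ • w := by
      rw [smul_sub, sub_smul, one_smul]; abel
    rw [this]
    exact (convex_closedBall (0:H) r) hz hw (by linarith [hτ.1, hτ.2]) hτ.1.le (by ring)
  have hslope : ∀ᶠ τ in nhdsWithin (0:ℝ) (Set.Ioi 0), 0 ≤ slope (fun τ : ℝ => ψ (zs + τ • (w - zs))) 0 τ := by
    filter_upwards [Ioo_mem_nhdsGT_of_mem (Set.mem_Ico.mpr ⟨le_refl _, zero_lt_one⟩)] with τ hτ
    rw [slope_def_field]
    have h0 : zs + (0:ℝ) • (w - zs) = zs := by norm_num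
    rw [h0]
    apply div_nonneg _ (by linarith [hτ.1] : (0:ℝ) ≤ τ - 0)
    have := hmin (hmem τ hτ)
    simpa using this
  have htend : Tendsto (slope (fun τ : ℝ => ψ (zs + τ • (w - zs))) 0)
      (nhdsWithin (0:ℝ) (Set.Ioi 0)) (nhds ⟪g, w - zs⟫) := by
    have := hasDerivAt_iff_tendsto_slope.mp hd
    exact this.mono_left (nhdsWithin_mono 0 (fun τ hτ => ne_of_gt hτ))
  exact ge_of_tendsto htend hslope

lemma convexOn_sub_inner {φ : H → ℝ} (hφ : ConvexOn ℝ Set.univ φ) (v : H) :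
    ConvexOn ℝ Set.univ (fun z => φ z - ⟪v, z⟫) := by
  refine ⟨convex_univ, ?_⟩
  intro a _ b _ p q hp hq hpq
  have h1 := hφ.2 (Set.mem_univ a) (Set.mem_univ b) hp hq hpq
  have h2 : ⟪v, p • a + q • b⟫ = p * ⟪v, a⟫ + q * ⟪v, b⟫ := by
    rw [inner_add_right, real_inner_smul_right, real_inner_smul_right]
  simp only [smul_eq_mul] at *
  linarith

lemma legendre_surj {φ : H → ℝ} (hconv : ConvexOn ℝ Set.univ φ)
    (hdiff : Differentiable ℝ φ)
    (hleg : Tendsto (fun z => ‖gradient φ z‖) (cocompact H) atTop) (v : H) :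
    ∃ z, gradient φ z = v := by
  by_contra hcon
  push_neg at hcon
  set ψ : H → ℝ := fun z => φ z - ⟪v, z⟫ with hψdef
  have hψconv : ConvexOn ℝ Set.univ ψ := convexOn_sub_inner hconv v
  have hψgrad : ∀ z : H, HasGradientAt ψ (gradient φ z - v) z := fun z =>
    gradsub (hdiff z).hasGradientAt (inner_hasGradientAt v z)
  have hψcont : Continuous ψ :=
    (hdiff.continuous).sub (continuous_const.inner continuous_id)
  -- every minimizer over a closed ball lies on the boundary
  have hbdry : ∀ r : ℝ, ∀ zs : H, zs ∈ closedBall (0:H) r →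
      IsMinOn ψ (closedBall 0 r) zs → ‖zs‖ = r := by
    intro r zs hzs hmin
    by_contra hne
    have hlt : ‖zs‖ < r := lt_of_le_of_ne (by simpa using hzs) hne
    have hloc : IsLocalMin ψ zs := hmin.isLocalMin
      (Metric.closedBall_mem_nhds_of_mem (by simpa using hlt))
    have h0 := hloc.hasFDerivAt_eq_zero (hψgrad zs).hasFDerivAt
    have : gradient φ zs - v = 0 := by
      have := congrArg (fun L => (toDual ℝ H).symm L) h0
      simpa [gradient] using this
    exact hcon zs (by rwa [sub_eq_zero] at this)
  -- minimizer on the unit ball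
  obtain ⟨z₁, hz₁mem, hz₁min⟩ := (isCompact_closedBall (0:H) 1).exists_isMinOn
    ⟨0, mem_closedBall_self zero_le_one⟩ hψcont.continuousOn
  set u₁ : H := gradient φ z₁ - v with hu₁def
  have hu₁ : u₁ ≠ 0 := by
    intro h
    rw [hu₁def, sub_eq_zero] at h
    exact hcon z₁ h
  have hu₁pos : 0 < ‖u₁‖ := norm_pos_iff.mpr hu₁
  -- large gradient outside a compact set
  set M : ℝ := 3 * ‖u₁‖ + ‖v‖ + 1 with hMdef
  have hev : ∀ᶠ z in cocompact H, M ≤ ‖gradient φ z‖ :=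
    hleg.eventually (eventually_ge_atTop M)
  obtain ⟨K, hKcomp, hKsub⟩ := mem_cocompact.mp hev
  obtain ⟨R, hKR⟩ := hKcomp.isBounded.subset_closedBall 0
  set r : ℝ := max (R + 1) 2 with hrdef
  obtain ⟨zr, hzrmem, hzrmin⟩ := (isCompact_closedBall (0:H) r).exists_isMinOn
    ⟨0, mem_closedBall_self (by positivity)⟩ hψcont.continuousOn
  have hzr : ‖zr‖ = r := hbdry r zr hzrmem hzrmin
  have hzrK : zr ∉ K := by
    intro h
    have := hKR h
    simp only [mem_closedBall, dist_zero_right] at this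
    have : r ≤ R := hzr ▸ this
    have : R + 1 ≤ r := le_max_left _ _
    linarith
  have hMr : M ≤ ‖gradient φ zr‖ := hKsub hzrK
  set ur : H := gradient φ zr - v with hurdef
  have hur_lb : 3 * ‖u₁‖ + 1 ≤ ‖ur‖ := by
    have := norm_sub_norm_le (gradient φ zr) v
    have h2 : ‖ur‖ ≥ ‖gradient φ zr‖ - ‖v‖ := this
    simp only [hMdef] at hMr
    linarith
  have hurpos : 0 < ‖ur‖ := by linarith
  -- first-order optimality with w pointing opposite to ur
  have hrpos : (0:ℝ) < r := lt_of_lt_of_le two_pos (le_max_right _ _)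
  have hkey : ⟪ur, zr⟫ ≤ -(r * ‖ur‖) := by
    have hw : (-(r * ‖ur‖⁻¹)) • ur ∈ closedBall (0:H) r := by
      simp only [mem_closedBall, dist_zero_right, norm_smul, Real.norm_eq_abs]
      rw [abs_neg, abs_of_nonneg (by positivity), mul_assoc,
        inv_mul_cancel₀ (ne_of_gt hurpos), mul_one]
    have h1 := ball_opt hzrmin hzrmem (hψgrad zr) hw
    rw [inner_sub_right, real_inner_smul_right, real_inner_self_eq_norm_mul_norm] at h1
    have he : -(r * ‖ur‖⁻¹) * (‖ur‖ * ‖ur‖) = -(r * ‖ur‖) := by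
      field_simp
    rw [he] at h1
    linarith
  have hmono := grad_mono_s11 hψconv (hψgrad zr) (hψgrad z₁)
  rw [inner_sub_left, inner_sub_right, inner_sub_right] at hmono
  have hz₁norm : ‖z₁‖ ≤ 1 := by simpa using hz₁mem
  have hb1 : |⟪ur, z₁⟫| ≤ ‖ur‖ * ‖z₁‖ := abs_real_inner_le_norm ur z₁
  have hb2 : |⟪u₁, zr⟫| ≤ ‖u₁‖ * ‖zr‖ := abs_real_inner_le_norm u₁ zr
  have hb3 : |⟪u₁, z₁⟫| ≤ ‖u₁‖ * ‖z₁‖ := abs_real_inner_le_norm u₁ z₁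
  rw [abs_le] at hb1 hb2 hb3
  have hr2 : (2:ℝ) ≤ r := le_max_right _ _
  have hz₁0 : 0 ≤ ‖z₁‖ := norm_nonneg _
  nlinarith [mul_le_mul_of_nonneg_left hz₁norm (norm_nonneg ur),
    mul_le_mul_of_nonneg_left hz₁norm (norm_nonneg u₁),
    mul_le_mul_of_nonneg_right hr2 (norm_nonneg u₁),
    mul_le_mul_of_nonneg_right hur_lb (by linarith : (0:ℝ) ≤ r - 1)]

lemma grad_inj_s11 {φ : H → ℝ} (hφ : StrictConvexOn ℝ Set.univ φ)
    (hdiff : Differentiable ℝ φ) {a b : H}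
    (h : gradient φ a = gradient φ b) : a = b := by
  by_contra hne
  have hstrict : φ ((2⁻¹:ℝ) • a + (2⁻¹:ℝ) • b) < 2⁻¹ * φ a + 2⁻¹ * φ b := by
    have := hφ.2 (Set.mem_univ a) (Set.mem_univ b) hne
      (by norm_num : (0:ℝ) < 2⁻¹) (by norm_num : (0:ℝ) < 2⁻¹) (by norm_num)
    simpa using this
  set m : H := (2⁻¹:ℝ) • a + (2⁻¹:ℝ) • b with hm
  have h1 := grad_ineq_s11 hφ.convexOn (hdiff a).hasGradientAt m
  have h2 := grad_ineq_s11 hφ.convexOn (hdiff b).hasGradientAt m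
  rw [h] at h1
  have hsum : ⟪gradient φ b, m - a⟫ + ⟪gradient φ b, m - b⟫ = 0 := by
    rw [← inner_add_right]
    have : (m - a) + (m - b) = 0 := by rw [hm]; module
    rw [this, inner_zero_right]
  linarith

lemma fenchel_eq {φ : H → ℝ} (hconv : ConvexOn ℝ Set.univ φ)
    (hdiff : Differentiable ℝ φ) {v zv : H} (hzv : gradient φ zv = v) :
    fenchel φ v = ⟪v, zv⟫ - φ zv := by
  have hub : ∀ z : H, ⟪v, z⟫ - φ z ≤ ⟪v, zv⟫ - φ zv := by
    intro z
    have := grad_ineq_s11 hconv (hdiff zv).hasGradientAt z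
    rw [hzv, inner_sub_right] at this
    linarith
  refine le_antisymm (ciSup_le hub) ?_
  exact le_ciSup ⟨⟪v, zv⟫ - φ zv, by rintro _ ⟨z, rfl⟩; exact hub z⟩ zv

lemma fenchel_young {φ : H → ℝ} (hconv : ConvexOn ℝ Set.univ φ)
    (hdiff : Differentiable ℝ φ) {v zv : H} (hzv : gradient φ zv = v) (z : H) :
    ⟪v, z⟫ - φ z ≤ fenchel φ v := by
  rw [fenchel_eq hconv hdiff hzv]
  have := grad_ineq_s11 hconv (hdiff zv).hasGradientAt z
  rw [hzv, inner_sub_right] at this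
  linarith

lemma Z_cont {φ : H → ℝ} (hgc : Continuous (gradient φ))
    (hleg : Tendsto (fun z => ‖gradient φ z‖) (cocompact H) atTop)
    {Z : H → H} (hZ : ∀ v, gradient φ (Z v) = v) (hZF : ∀ z, Z (gradient φ z) = z) :
    Continuous Z := by
  have hclosed : ∀ C : Set H, IsClosed C → IsClosed (gradient φ '' C) := by
    intro C hC
    refine isClosed_of_closure_subset ?_
    intro w hw
    obtain ⟨K, hK, hKsub⟩ := mem_cocompact.mp
      (hleg.eventually (eventually_ge_atTop (‖w‖ + 2)))
    have hS : IsCompact (C ∩ K) := hK.inter_left hC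
    have himg : IsClosed (gradient φ '' (C ∩ K)) := (hS.image hgc).isClosed
    have hwS : w ∈ closure (gradient φ '' (C ∩ K)) := by
      rw [_root_.mem_closure_iff] at hw ⊢
      intro o ho hwo
      obtain ⟨p, ⟨hpo, hpb⟩, z, hzC, rfl⟩ :=
        hw (o ∩ ball w 1) (ho.inter isOpen_ball) ⟨hwo, mem_ball_self one_pos⟩
      have hzK : z ∈ K := by
        by_contra hzK
        have h1 : ‖w‖ + 2 ≤ ‖gradient φ z‖ := hKsub hzK
        have h2 : ‖gradient φ z - w‖ < 1 := by
          simpa [dist_eq_norm] using mem_ball_iff_norm.mp hpb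
        have h3 := norm_sub_norm_le (gradient φ z) w
        linarith
      exact ⟨gradient φ z, hpo, z, ⟨hzC, hzK⟩, rfl⟩
    rw [himg.closure_eq] at hwS
    exact Set.image_mono Set.inter_subset_left hwS
  rw [continuous_iff_isClosed]
  intro C hC
  have : Z ⁻¹' C = gradient φ '' C := by
    ext v
    constructor
    · intro hv; exact ⟨Z v, hv, hZ v⟩
    · rintro ⟨z, hz, rfl⟩; rwa [Set.mem_preimage, hZF]
  rw [this]
  exact hclosed C hC

lemma fenchel_hasGradient {φ : H → ℝ} (hconv : ConvexOn ℝ Set.univ φ)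
    (hdiff : Differentiable ℝ φ) {Z : H → H} (hZ : ∀ v, gradient φ (Z v) = v)
    (hZcont : Continuous Z) (v : H) :
    HasGradientAt (fenchel φ) (Z v) v := by
  rw [hasGradientAt_iff_isLittleO, Asymptotics.isLittleO_iff]
  intro c hc
  have htd : Tendsto (fun u => ‖Z u - Z v‖) (nhds v) (nhds 0) := by
    have h1 := ((hZcont.sub (continuous_const (y := Z v))).norm).tendsto v
    simpa using h1
  have hball : ∀ᶠ u in nhds v, ‖Z u - Z v‖ < c := htd.eventually_lt_const hc
  filter_upwards [hball] with u hu
  have hfu : fenchel φ u = ⟪u, Z u⟫ - φ (Z u) := fenchel_eq hconv hdiff (hZ u)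
  have hfv : fenchel φ v = ⟪v, Z v⟫ - φ (Z v) := fenchel_eq hconv hdiff (hZ v)
  have hlow : 0 ≤ fenchel φ u - fenchel φ v - ⟪Z v, u - v⟫ := by
    have h1 : ⟪u, Z v⟫ - φ (Z v) ≤ fenchel φ u := fenchel_young hconv hdiff (hZ u) (Z v)
    have h2 : ⟪Z v, u - v⟫ = ⟪u, Z v⟫ - ⟪v, Z v⟫ := by
      rw [real_inner_comm, inner_sub_left]
    rw [h2, hfv]; linarith
  have hup : fenchel φ u - fenchel φ v - ⟪Z v, u - v⟫ ≤ ⟪u - v, Z u - Z v⟫ := by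
    have h1 : ⟪v, Z u⟫ - φ (Z u) ≤ fenchel φ v := fenchel_young hconv hdiff (hZ v) (Z u)
    have h2 : ⟪u - v, Z u - Z v⟫ = ⟪u, Z u⟫ - ⟪v, Z u⟫ - ⟪u, Z v⟫ + ⟪v, Z v⟫ := by
      rw [inner_sub_left, inner_sub_right, inner_sub_right]; ring
    have h3 : ⟪Z v, u - v⟫ = ⟪u, Z v⟫ - ⟪v, Z v⟫ := by
      rw [real_inner_comm, inner_sub_left]
    rw [h2, h3, hfu]; linarith
  have hcs : ⟪u - v, Z u - Z v⟫ ≤ ‖u - v‖ * ‖Z u - Z v‖ := real_inner_le_norm _ _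
  have hZd : ‖Z u - Z v‖ ≤ c := hu.le
  rw [Real.norm_eq_abs, abs_of_nonneg hlow]
  calc fenchel φ u - fenchel φ v - ⟪Z v, u - v⟫ ≤ ‖u - v‖ * ‖Z u - Z v‖ := le_trans hup hcs
    _ ≤ ‖u - v‖ * c := by nlinarith [norm_nonneg (u - v)]
    _ = c * ‖u - v‖ := by ring

lemma gradient_continuous {φ : H → ℝ} (hφ : ContDiff ℝ 2 φ) : Continuous (gradient φ) := by
  have h1 : Continuous (fderiv ℝ φ) := hφ.continuous_fderiv two_ne_zero
  exact ((toDual ℝ H).symm.continuous).comp h1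

lemma lyap_hasDerivAt {φ : H → ℝ} (hconv : ConvexOn ℝ Set.univ φ)
    (hdiff : Differentiable ℝ φ) {Z : H → H} (hZ : ∀ v, gradient φ (Z v) = v)
    (hZcont : Continuous Z) {x : ℝ → H} {xd : H} {t : ℝ} (hx : HasDerivAt x xd t) (p : H) :
    HasDerivAt (fun u => fenchel φ (x u) - ⟪x u, p⟫ + φ p) (⟪Z (x t) - p, xd⟫) t := by
  have h1 : HasDerivAt (fun u => fenchel φ (x u)) ⟪Z (x t), xd⟫ t := by
    have := ((fenchel_hasGradient hconv hdiff hZ hZcont (x t)).hasFDerivAt).comp_hasDerivAt t hx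
    simpa [toDual_apply_apply, Function.comp_def] using this
  have h2 : HasDerivAt (fun u => ⟪x u, p⟫) ⟪p, xd⟫ t := by
    have h3 := ((inner_hasGradientAt p (x t)).hasFDerivAt).comp_hasDerivAt t hx
    have h4 : (fun u => ⟪x u, p⟫) = fun u => ⟪p, x u⟫ := by
      funext u; exact real_inner_comm _ _
    rw [h4]
    simpa [toDual_apply_apply, Function.comp_def] using h3
  have h5 := (h1.sub h2).add_const (φ p)
  have h6 : ⟪Z (x t), xd⟫ - ⟪p, xd⟫ = ⟪Z (x t) - p, xd⟫ := (inner_sub_left _ _ _).symm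
  rw [h6] at h5
  exact h5

/-- convex rate: along the mirror descent dynamics,
`f(y(t)) − f(ȳ) ≤ D_φ(ȳ, y₀) / t` for every `t > 0`. -/
theorem mirror_descent_convex_rate {n : ℕ} (f φ : EuclideanSpace ℝ (Fin n) → ℝ)
    (hf : ContDiff ℝ 1 f) (hfconv : StrictConvexOn ℝ Set.univ f)
    (ybar : EuclideanSpace ℝ (Fin n)) (hmin : ∀ z, f ybar ≤ f z)
    (hφ : ContDiff ℝ 2 φ) (hφconv : StrictConvexOn ℝ Set.univ φ)
    (hleg : LegendreType φ)
    (x₀ y₀ : EuclideanSpace ℝ (Fin n))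
    (x y : ℝ → EuclideanSpace ℝ (Fin n)) (hx0 : x 0 = x₀)
    (hode : ∀ t : ℝ, 0 ≤ t →
      HasDerivAt x (-gradient f (gradient (fenchel φ) (x t))) t)
    (hy : y = fun t => gradient (fenchel φ) (x t))
    (hy₀ : y₀ = gradient (fenchel φ) x₀) :
    ∀ t : ℝ, 0 < t → f (y t) - f ybar ≤ bregman φ ybar y₀ / t := by
  have hφconv' : ConvexOn ℝ Set.univ φ := hφconv.convexOn
  have hφdiff : Differentiable ℝ φ := hφ.differentiable two_ne_zero
  have hfdiff : Differentiable ℝ f := hf.differentiable one_ne_zero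
  choose Z hZ using legendre_surj hφconv' hφdiff hleg
  have hZF : ∀ z, Z (gradient φ z) = z := fun z => grad_inj_s11 hφconv hφdiff (hZ _)
  have hZcont : Continuous Z := Z_cont (gradient_continuous hφ) hleg hZ hZF
  have hG : gradient (fenchel φ) = Z :=
    gradient_eq (fun v => fenchel_hasGradient hφconv' hφdiff hZ hZcont v)
  rw [hG] at hy hy₀ hode
  -- basic facts along the trajectory
  have hA : ∀ p : EuclideanSpace ℝ (Fin n), ∀ s : ℝ, 0 ≤ s →
      HasDerivAt (fun u => fenchel φ (x u) - ⟪x u, p⟫ + φ p)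
        (⟪Z (x s) - p, -gradient f (Z (x s))⟫) s :=
    fun p s hs => lyap_hasDerivAt hφconv' hφdiff hZ hZcont (hode s hs) p
  have hderiv_le : ∀ (p : EuclideanSpace ℝ (Fin n)) (s : ℝ),
      ⟪Z (x s) - p, -gradient f (Z (x s))⟫ ≤ f p - f (Z (x s)) := by
    intro p s
    have hgi := grad_ineq_s11 hfconv.convexOn (hfdiff (Z (x s))).hasGradientAt p
    have c1 : ⟪Z (x s) - p, -gradient f (Z (x s))⟫
        = -(⟪gradient f (Z (x s)), Z (x s)⟫ - ⟪gradient f (Z (x s)), p⟫) := by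
      rw [inner_neg_right, inner_sub_left, real_inner_comm (Z (x s)), real_inner_comm p]
    rw [c1]
    rw [inner_sub_right] at hgi
    linarith
  have hA0 : ∀ (p : EuclideanSpace ℝ (Fin n)) (u : ℝ),
      0 ≤ fenchel φ (x u) - ⟪x u, p⟫ + φ p := by
    intro p u
    have := fenchel_young hφconv' hφdiff (hZ (x u)) p
    linarith
  have hAeq : ∀ s : ℝ, fenchel φ (x s) - ⟪x s, Z (x s)⟫ + φ (Z (x s)) = 0 := by
    intro s
    rw [fenchel_eq hφconv' hφdiff (hZ (x s))]
    ring
  have hxcont : ∀ s : ℝ, 0 ≤ s → ContinuousAt x s := fun s hs => (hode s hs).continuousAt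
  -- monotonicity of f along the output trajectory
  have hmono : ∀ s u : ℝ, 0 ≤ s → s ≤ u → f (Z (x u)) ≤ f (Z (x s)):= by
    intro s u hs hsu
    rcases eq_or_lt_of_le hsu with rfl | hlt
    · exact le_refl _
    by_contra hgt
    push_neg at hgt
    set S := {w : ℝ | w ∈ Icc s u ∧ f (Z (x w)) ≤ f (Z (x s))} with hSdef
    have hfycont : ContinuousOn (fun w => f (Z (x w))) (Icc s u) := fun w hw =>
      (((hfdiff.continuous.comp hZcont).continuousAt).comp
        (hxcont w (le_trans hs hw.1))).continuousWithinAt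
    have hSclosed : IsClosed S := by
      have := hfycont.preimage_isClosed_of_isClosed isClosed_Icc
        (isClosed_Iic (a := f (Z (x s))))
      rw [hSdef]; exact this
    have hSne : S.Nonempty := ⟨s, ⟨le_refl _, hlt.le⟩, le_refl _⟩
    have hSbdd : BddAbove S := ⟨u, fun w hw => hw.1.2⟩
    have hs'S : sSup S ∈ S := hSclosed.csSup_mem hSne hSbdd
    have hs's : s ≤ sSup S := hs'S.1.1
    have hs'u : sSup S ≤ u := hs'S.1.2
    have hs'lt : sSup S < u := by
      rcases eq_or_lt_of_le hs'u with heq | h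
      · exfalso; rw [heq] at hs'S; exact absurd hs'S.2 (not_le.mpr hgt)
      · exact h
    have hgt' : ∀ w, w ∈ Ioc (sSup S) u → f (Z (x (sSup S))) < f (Z (x w)) := by
      intro w hw
      have hwS : w ∉ S := fun hwS => absurd (le_csSup hSbdd hwS) (not_le.mpr hw.1)
      have hwI : w ∈ Icc s u := ⟨le_trans hs's hw.1.le, hw.2⟩
      have h2 : ¬ f (Z (x w)) ≤ f (Z (x s)) := fun h => hwS ⟨hwI, h⟩
      push_neg at h2
      exact lt_of_le_of_lt hs'S.2 h2
    set p := Z (x (sSup S)) with hpdef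
    have hs'0 : 0 ≤ sSup S := le_trans hs hs's
    obtain ⟨ξ, hξ, hξderiv⟩ := exists_hasDerivAt_eq_slope
      (fun w => fenchel φ (x w) - ⟪x w, p⟫ + φ p)
      (fun w => ⟪Z (x w) - p, -gradient f (Z (x w))⟫) hs'lt
      (fun w hw => (hA p w (le_trans hs'0 hw.1)).continuousAt.continuousWithinAt)
      (fun w hw => hA p w (le_trans hs'0 hw.1.le))
    have hBs' : fenchel φ (x (sSup S)) - ⟪x (sSup S), p⟫ + φ p = 0 := hAeq (sSup S)
    have hBu : 0 ≤ fenchel φ (x u) - ⟪x u, p⟫ + φ p := hA0 p u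
    have hslope : 0 ≤ ⟪Z (x ξ) - p, -gradient f (Z (x ξ))⟫ := by
      rw [hξderiv]
      apply div_nonneg _ (by linarith [hs'lt] : (0:ℝ) ≤ u - sSup S)
      linarith
    have hlt2 := hderiv_le p ξ
    have hneg : f p - f (Z (x ξ)) < 0 := by
      have := hgt' ξ ⟨hξ.1, hξ.2.le⟩
      rw [hpdef]; linarith
    linarith
  -- final bound
  intro t ht
  set c := f (Z (x t)) - f ybar with hcdef
  have hkey : c * t ≤ fenchel φ x₀ - ⟪x₀, ybar⟫ + φ ybar := by
    have hh : ∀ u : ℝ, 0 ≤ u → HasDerivAt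
        (fun w => fenchel φ (x w) - ⟪x w, ybar⟫ + φ ybar + c * w)
        (⟪Z (x u) - ybar, -gradient f (Z (x u))⟫ + c) u := by
      intro u hu
      have hlin : HasDerivAt (fun w : ℝ => c * w) c u := by
        simpa using (hasDerivAt_id u).const_mul c
      exact (hA ybar u hu).add hlin
    obtain ⟨ξ, hξ, hξderiv⟩ := exists_hasDerivAt_eq_slope
      (fun w => fenchel φ (x w) - ⟪x w, ybar⟫ + φ ybar + c * w)
      (fun u => ⟪Z (x u) - ybar, -gradient f (Z (x u))⟫ + c) ht
      (fun w hw => (hh w hw.1).continuousAt.continuousWithinAt)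
      (fun w hw => hh w hw.1.le)
    have hd1 : ⟪Z (x ξ) - ybar, -gradient f (Z (x ξ))⟫ + c ≤ 0 := by
      have h1 := hderiv_le ybar ξ
      have h2 := hmono ξ t hξ.1.le hξ.2.le
      rw [hcdef]; linarith
    rw [hξderiv] at hd1
    have hVt : 0 ≤ fenchel φ (x t) - ⟪x t, ybar⟫ + φ ybar := hA0 ybar t
    have hdiv : (fenchel φ (x t) - ⟪x t, ybar⟫ + φ ybar + c * t
        - (fenchel φ (x 0) - ⟪x 0, ybar⟫ + φ ybar + c * 0)) / (t - 0) ≤ 0 := hd1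
    rw [div_nonpos_iff] at hdiv
    rcases hdiv with ⟨h1, h2⟩ | ⟨h1, h2⟩
    · linarith
    · rw [hx0] at h1; linarith
  have hbreg : bregman φ ybar y₀ = fenchel φ x₀ - ⟪x₀, ybar⟫ + φ ybar := by
    rw [bregman, hy₀, hZ x₀, fenchel_eq hφconv' hφdiff (hZ x₀), inner_sub_right]
    ring
  have hyt : y t = Z (x t) := by rw [hy]
  rw [hyt, hbreg, le_div_iff₀ ht]
  exact hkey
end
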